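/- arXiv:1502.06137 — 4 statements merged into one kernel-verified Lean document; each statement's English description precedes it below -/
import Mathlib

section
/- Let G be a graph of diameter at most two on vertices {1,…,n}, let D ∈ (0, π), and suppose real numbers φ_1,…,φ_n satisfy φ_l ≤ φ_i ≤ φ_k for all i, with φ_k − φ_l = D, where k and l are two fixed (not necessarily distinct-role) vertices. Then Σ_{i ∈ N_k} sin(φ_k − φ_i) + Σ_{j ∈ N_l} sin(φ_j − φ_l) ≥ P_{kl} · sin(D), where P_{kl} = (number of common neighbors of k and l) + 2·A_{kl}. -/
open Real Finset

theorem sum_sin_ge_P_sin (n : ℕ) (G : SimpleGraph (Fin n)) [DecidableRel G.Adj]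
    (hdiam : ∀ i j : Fin n, i ≠ j → G.Adj i j ∨ ∃ m, G.Adj i m ∧ G.Adj m j)
    (D : ℝ) (hD0 : 0 < D) (hDπ : D < π)
    (φ : Fin n → ℝ) (k l : Fin n)
    (hφ : ∀ i, φ l ≤ φ i ∧ φ i ≤ φ k) (hkl : φ k - φ l = D) :
    ∑ i ∈ G.neighborFinset k, Real.sin (φ k - φ i)
      + ∑ j ∈ G.neighborFinset l, Real.sin (φ j - φ l)
    ≥ (((G.neighborFinset k ∩ G.neighborFinset l).card
        + 2 * (if G.Adj k l then 1 else 0) : ℕ) : ℝ) * Real.sin D := by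
  set S := G.neighborFinset k ∩ G.neighborFinset l with hSdef
  have hsinD : 0 ≤ Real.sin D := Real.sin_nonneg_of_nonneg_of_le_pi hD0.le hDπ.le
  have h1 : ∀ i : Fin n, 0 ≤ Real.sin (φ k - φ i) := by
    intro i
    apply Real.sin_nonneg_of_nonneg_of_le_pi
    · linarith [(hφ i).2]
    · linarith [(hφ i).1]
  have h2 : ∀ i : Fin n, 0 ≤ Real.sin (φ i - φ l) := by
    intro i
    apply Real.sin_nonneg_of_nonneg_of_le_pi
    · linarith [(hφ i).1]
    · linarith [(hφ i).2]
  have hpair : ∀ m ∈ S, Real.sin D ≤ Real.sin (φ k - φ m) + Real.sin (φ m - φ l) := by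
    intro m _
    have hadd : (φ k - φ m) + (φ m - φ l) = D := by linarith
    have hs := Real.sin_add (φ k - φ m) (φ m - φ l)
    rw [hadd] at hs
    nlinarith [Real.cos_le_one (φ k - φ m), Real.cos_le_one (φ m - φ l), h1 m, h2 m]
  have hSsum : (S.card : ℝ) * Real.sin D
      ≤ ∑ m ∈ S, Real.sin (φ k - φ m) + ∑ m ∈ S, Real.sin (φ m - φ l) := by
    rw [← Finset.sum_add_distrib]
    calc (S.card : ℝ) * Real.sin D = ∑ _m ∈ S, Real.sin D := by
          rw [Finset.sum_const, nsmul_eq_mul]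
      _ ≤ _ := Finset.sum_le_sum hpair
  by_cases hadj : G.Adj k l
  · have hlk : l ∈ G.neighborFinset k := by
      rw [SimpleGraph.mem_neighborFinset]; exact hadj
    have hkl' : k ∈ G.neighborFinset l := by
      rw [SimpleGraph.mem_neighborFinset]; exact hadj.symm
    have hSk : S ⊆ (G.neighborFinset k).erase l := by
      intro m hm
      rw [hSdef, Finset.mem_inter, SimpleGraph.mem_neighborFinset,
        SimpleGraph.mem_neighborFinset] at hm
      rw [Finset.mem_erase, SimpleGraph.mem_neighborFinset]
      exact ⟨fun h => (h ▸ hm.2).ne' rfl, hm.1⟩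
    have hSl : S ⊆ (G.neighborFinset l).erase k := by
      intro m hm
      rw [hSdef, Finset.mem_inter, SimpleGraph.mem_neighborFinset,
        SimpleGraph.mem_neighborFinset] at hm
      rw [Finset.mem_erase, SimpleGraph.mem_neighborFinset]
      exact ⟨fun h => (h ▸ hm.1).ne' rfl, hm.2⟩
    have e1 : ∑ i ∈ (G.neighborFinset k).erase l, Real.sin (φ k - φ i)
        + Real.sin (φ k - φ l) = ∑ i ∈ G.neighborFinset k, Real.sin (φ k - φ i) :=
      Finset.sum_erase_add _ _ hlk
    have e2 : ∑ i ∈ (G.neighborFinset l).erase k, Real.sin (φ i - φ l)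
        + Real.sin (φ k - φ l) = ∑ i ∈ G.neighborFinset l, Real.sin (φ i - φ l) :=
      Finset.sum_erase_add _ _ hkl'
    have b1 : ∑ m ∈ S, Real.sin (φ k - φ m)
        ≤ ∑ i ∈ (G.neighborFinset k).erase l, Real.sin (φ k - φ i) :=
      Finset.sum_le_sum_of_subset_of_nonneg hSk (fun i _ _ => h1 i)
    have b2 : ∑ m ∈ S, Real.sin (φ m - φ l)
        ≤ ∑ i ∈ (G.neighborFinset l).erase k, Real.sin (φ i - φ l) :=
      Finset.sum_le_sum_of_subset_of_nonneg hSl (fun i _ _ => h2 i)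
    have hsD : Real.sin (φ k - φ l) = Real.sin D := by rw [hkl]
    simp only [hadj, if_true]
    push_cast
    linarith
  · have hSk : S ⊆ G.neighborFinset k := Finset.inter_subset_left
    have hSl : S ⊆ G.neighborFinset l := Finset.inter_subset_right
    have b1 : ∑ m ∈ S, Real.sin (φ k - φ m)
        ≤ ∑ i ∈ G.neighborFinset k, Real.sin (φ k - φ i) :=
      Finset.sum_le_sum_of_subset_of_nonneg hSk (fun i _ _ => h1 i)
    have b2 : ∑ m ∈ S, Real.sin (φ m - φ l)
        ≤ ∑ i ∈ G.neighborFinset l, Real.sin (φ i - φ l) :=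
      Finset.sum_le_sum_of_subset_of_nonneg hSl (fun i _ _ => h2 i)
    simp only [hadj, if_false]
    push_cast
    linarith
end

section
/- Let G be a graph of diameter at most two, D ∈ (0, π), and suppose the coupling strength K satisfies K ≥ n·|ω̄_i − ω̄_j| / (P_{ij}·sin D) for all pairs i, j. Then whenever the phases satisfy φ_l ≤ φ_i ≤ φ_k for all i with φ_k − φ_l = D, the instantaneous rates of the system φ̇_i = ω̄_i + (K/n) Σ_{j ∈ N_i} sin(φ_j − φ_i) satisfy φ̇_k − φ̇_l ≤ 0. -/
open Real Finset

lemma sin_add_le_aux (a b : ℝ) (ha : 0 ≤ a) (hb : 0 ≤ b) (hab : a + b ≤ π) :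
    Real.sin (a + b) ≤ Real.sin a + Real.sin b := by
  have hsa : 0 ≤ Real.sin a := Real.sin_nonneg_of_nonneg_of_le_pi ha (by linarith)
  have hsb : 0 ≤ Real.sin b := Real.sin_nonneg_of_nonneg_of_le_pi hb (by linarith)
  rw [Real.sin_add]
  nlinarith [Real.cos_le_one a, Real.cos_le_one b]

theorem rate_diff_nonpos_of_K_bound (n : ℕ) (hn : 0 < n)
    (G : SimpleGraph (Fin n)) [DecidableRel G.Adj]
    (hdiam : ∀ i j : Fin n, i ≠ j → G.Adj i j ∨ ∃ m, G.Adj i m ∧ G.Adj m j)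
    (D : ℝ) (hD0 : 0 < D) (hDπ : D < π)
    (ω : Fin n → ℝ) (K : ℝ)
    (hK : ∀ i j : Fin n, K ≥ (n : ℝ) * |ω i - ω j| /
        ((((G.neighborFinset i ∩ G.neighborFinset j).card
            + 2 * (if G.Adj i j then 1 else 0) : ℕ) : ℝ) * Real.sin D))
    (φ : Fin n → ℝ) (k l : Fin n)
    (hφ : ∀ i, φ l ≤ φ i ∧ φ i ≤ φ k) (hkl : φ k - φ l = D) :
    (ω k + K / n * ∑ j ∈ G.neighborFinset k, Real.sin (φ j - φ k))
      - (ω l + K / n * ∑ j ∈ G.neighborFinset l, Real.sin (φ j - φ l)) ≤ 0 := by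
  have hneq : k ≠ l := by
    rintro rfl
    rw [sub_self] at hkl
    linarith
  have hsinD : 0 < Real.sin D := Real.sin_pos_of_pos_of_lt_pi hD0 hDπ
  have hnR : (0:ℝ) < n := by exact_mod_cast hn
  have hK0 : 0 ≤ K := by simpa using hK k k
  set S := G.neighborFinset k ∩ G.neighborFinset l with hS
  set A : ℕ := if G.Adj k l then 1 else 0 with hA
  -- P ≥ 1
  have hP1 : 1 ≤ S.card + 2 * A := by
    rcases hdiam k l hneq with h | ⟨m, h1, h2⟩
    · have : A = 1 := by simp [hA, h]
      omega
    · have hm : m ∈ S := by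
        simp only [hS, Finset.mem_inter, SimpleGraph.mem_neighborFinset]
        exact ⟨h1, h2.symm⟩
      have := Finset.card_pos.mpr ⟨m, hm⟩
      omega
  set Q : ℝ := ((S.card + 2 * A : ℕ) : ℝ) with hQ
  have hQ1 : (1:ℝ) ≤ Q := by rw [hQ]; exact_mod_cast hP1
  have hQpos : 0 < Q * Real.sin D := by nlinarith
  -- frequency bound
  have hωb : ω k - ω l ≤ K * Q * Real.sin D / n := by
    have h := hK k l
    rw [ge_iff_le, div_le_iff₀ hQpos] at h
    have h2 : ω k - ω l ≤ |ω k - ω l| := le_abs_self _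
    rw [le_div_iff₀ hnR]
    nlinarith
  -- sign facts
  have hnonpos : ∀ j, Real.sin (φ j - φ k) ≤ 0 := by
    intro j
    have h1 : 0 ≤ Real.sin (φ k - φ j) :=
      Real.sin_nonneg_of_nonneg_of_le_pi (by linarith [(hφ j).2])
        (by linarith [(hφ j).1, hDπ.le])
    have : Real.sin (φ j - φ k) = -Real.sin (φ k - φ j) := by
      rw [← Real.sin_neg]; ring_nf
    linarith
  have hnonneg : ∀ j, 0 ≤ Real.sin (φ j - φ l) := by
    intro j
    exact Real.sin_nonneg_of_nonneg_of_le_pi (by linarith [(hφ j).1])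
      (by linarith [(hφ j).2, hDπ.le])
  -- pointwise bound on common neighbors
  have hpt : ∀ j, Real.sin (φ j - φ k) - Real.sin (φ j - φ l) ≤ -Real.sin D := by
    intro j
    have h := sin_add_le_aux (φ k - φ j) (φ j - φ l)
      (by linarith [(hφ j).2]) (by linarith [(hφ j).1])
      (by rw [show φ k - φ j + (φ j - φ l) = D by linarith]; exact hDπ.le)
    rw [show φ k - φ j + (φ j - φ l) = D by linarith] at h
    have : Real.sin (φ k - φ j) = -Real.sin (φ j - φ k) := by
      rw [← Real.sin_neg]; ring_nf
    linarith
  have hsum : ∑ j ∈ S, (Real.sin (φ j - φ k) - Real.sin (φ j - φ l))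
      ≤ S.card * (-Real.sin D) := by
    calc ∑ j ∈ S, (Real.sin (φ j - φ k) - Real.sin (φ j - φ l))
        ≤ ∑ _j ∈ S, (-Real.sin D) := Finset.sum_le_sum fun j _ => hpt j
      _ = S.card * (-Real.sin D) := by rw [Finset.sum_const, nsmul_eq_mul]
  -- key coupling bound
  have key : (∑ j ∈ G.neighborFinset k, Real.sin (φ j - φ k))
      - (∑ j ∈ G.neighborFinset l, Real.sin (φ j - φ l)) ≤ -(Q * Real.sin D) := by
    by_cases hadj : G.Adj k l
    · have hA1 : A = 1 := by simp [hA, hadj]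
      have hlS : l ∉ S := by
        simp [hS, SimpleGraph.mem_neighborFinset]
      have hkS : k ∉ S := by
        simp [hS, SimpleGraph.mem_neighborFinset]
      have hTk : insert l S ⊆ G.neighborFinset k := by
        intro x hx
        rcases Finset.mem_insert.mp hx with rfl | hx
        · simpa [SimpleGraph.mem_neighborFinset] using hadj
        · exact (Finset.mem_inter.mp hx).1
      have hTl : insert k S ⊆ G.neighborFinset l := by
        intro x hx
        rcases Finset.mem_insert.mp hx with rfl | hx
        · simpa [SimpleGraph.mem_neighborFinset] using hadj.symm
        · exact (Finset.mem_inter.mp hx).2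
      have e1 := Finset.sum_sdiff (f := fun j => Real.sin (φ j - φ k)) hTk
      have e2 := Finset.sum_sdiff (f := fun j => Real.sin (φ j - φ l)) hTl
      have b1 : ∑ j ∈ G.neighborFinset k \ insert l S, Real.sin (φ j - φ k) ≤ 0 :=
        Finset.sum_nonpos fun j _ => hnonpos j
      have b2 : 0 ≤ ∑ j ∈ G.neighborFinset l \ insert k S, Real.sin (φ j - φ l) :=
        Finset.sum_nonneg fun j _ => hnonneg j
      have s1 : ∑ j ∈ insert l S, Real.sin (φ j - φ k)
          = Real.sin (φ l - φ k) + ∑ j ∈ S, Real.sin (φ j - φ k) :=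
        Finset.sum_insert hlS
      have s2 : ∑ j ∈ insert k S, Real.sin (φ j - φ l)
          = Real.sin (φ k - φ l) + ∑ j ∈ S, Real.sin (φ j - φ l) :=
        Finset.sum_insert hkS
      have v1 : Real.sin (φ l - φ k) = -Real.sin D := by
        rw [show φ l - φ k = -D by linarith, Real.sin_neg]
      have v2 : Real.sin (φ k - φ l) = Real.sin D := by rw [hkl]
      have hQval : Q = S.card + 2 := by
        rw [hQ, hA1]; push_cast; ring
      have hsplit : ∑ j ∈ S, (Real.sin (φ j - φ k) - Real.sin (φ j - φ l))
          = ∑ j ∈ S, Real.sin (φ j - φ k) - ∑ j ∈ S, Real.sin (φ j - φ l) :=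
        Finset.sum_sub_distrib _ _
      rw [hQval]
      linarith [hsum]
    · have hA0 : A = 0 := by simp [hA, hadj]
      have hTk : S ⊆ G.neighborFinset k := Finset.inter_subset_left
      have hTl : S ⊆ G.neighborFinset l := Finset.inter_subset_right
      have e1 := Finset.sum_sdiff (f := fun j => Real.sin (φ j - φ k)) hTk
      have e2 := Finset.sum_sdiff (f := fun j => Real.sin (φ j - φ l)) hTl
      have b1 : ∑ j ∈ G.neighborFinset k \ S, Real.sin (φ j - φ k) ≤ 0 :=
        Finset.sum_nonpos fun j _ => hnonpos j
      have b2 : 0 ≤ ∑ j ∈ G.neighborFinset l \ S, Real.sin (φ j - φ l) :=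
        Finset.sum_nonneg fun j _ => hnonneg j
      have hQval : Q = S.card := by rw [hQ, hA0]; push_cast; ring
      have hsplit : ∑ j ∈ S, (Real.sin (φ j - φ k) - Real.sin (φ j - φ l))
          = ∑ j ∈ S, Real.sin (φ j - φ k) - ∑ j ∈ S, Real.sin (φ j - φ l) :=
        Finset.sum_sub_distrib _ _
      rw [hQval]
      linarith [hsum]
  -- combine
  have hKn : 0 ≤ K / n := by positivity
  have h2 : K / n * ((∑ j ∈ G.neighborFinset k, Real.sin (φ j - φ k))
      - (∑ j ∈ G.neighborFinset l, Real.sin (φ j - φ l)))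
      ≤ K / n * (-(Q * Real.sin D)) := mul_le_mul_of_nonneg_left key hKn
  have e3 : K / n * ((∑ j ∈ G.neighborFinset k, Real.sin (φ j - φ k))
      - (∑ j ∈ G.neighborFinset l, Real.sin (φ j - φ l)))
      = K / n * (∑ j ∈ G.neighborFinset k, Real.sin (φ j - φ k))
        - K / n * (∑ j ∈ G.neighborFinset l, Real.sin (φ j - φ l)) := by ring
  have e4 : K / n * (-(Q * Real.sin D)) = -(K * Q * Real.sin D / n) := by
    ring
  linarith
end

section
/- Suppose vertices k and l of a graph G are adjacent and ω̄_k = ω̄_l. If the phases satisfy φ_l ≤ φ_i ≤ φ_k for all i and 0 < φ_k − φ_l < π, then for the system φ̇_i = ω̄_i + Σ_{j ∈ N_i} (K_{ij}/n) sin(φ_j − φ_i) with nonnegative symmetric couplings, one has φ̇_k − φ̇_l ≤ 0. -/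
open Real Finset

theorem rate_diff_nonpos_of_eq_freq (n : ℕ) (hn : 0 < n)
    (G : SimpleGraph (Fin n)) [DecidableRel G.Adj]
    (ω : Fin n → ℝ) (K : Fin n → Fin n → ℝ)
    (hKnn : ∀ i j, 0 ≤ K i j) (hKsym : ∀ i j, K i j = K j i)
    (φ : Fin n → ℝ) (k l : Fin n)
    (hadj : G.Adj k l) (hω : ω k = ω l)
    (hφ : ∀ i, φ l ≤ φ i ∧ φ i ≤ φ k)
    (h0 : 0 < φ k - φ l) (hπ : φ k - φ l < π) :
    (ω k + ∑ j ∈ G.neighborFinset k, K k j / n * Real.sin (φ j - φ k))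
      - (ω l + ∑ j ∈ G.neighborFinset l, K l j / n * Real.sin (φ j - φ l)) ≤ 0 := by
  have h1 : ∑ j ∈ G.neighborFinset k, K k j / n * Real.sin (φ j - φ k) ≤ 0 := by
    apply Finset.sum_nonpos
    intro j _
    apply mul_nonpos_of_nonneg_of_nonpos
    · exact div_nonneg (hKnn _ _) (Nat.cast_nonneg n)
    · have h : Real.sin (φ k - φ j) ≥ 0 := by
        apply Real.sin_nonneg_of_nonneg_of_le_pi
        · linarith [(hφ j).2]
        · linarith [(hφ j).1]
      have : φ j - φ k = -(φ k - φ j) := by ring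
      rw [this, Real.sin_neg]; linarith
  have h2 : 0 ≤ ∑ j ∈ G.neighborFinset l, K l j / n * Real.sin (φ j - φ l) := by
    apply Finset.sum_nonneg
    intro j _
    apply mul_nonneg
    · exact div_nonneg (hKnn _ _) (Nat.cast_nonneg n)
    · apply Real.sin_nonneg_of_nonneg_of_le_pi
      · linarith [(hφ j).1]
      · linarith [(hφ j).2]
  linarith
end

section
/- Let D ∈ (0, π). Suppose nonnegative couplings (K_{ij}) satisfy: for every choice of δ : M → {0,1}, |ω̄_k − ω̄_l| − (2K_{kl}/n) sin D − (sin D / n) Σ_{m∈M} [δ(m) K_{km} + (1 − δ(m)) K_{lm}] ≤ 0, where M is the set of common neighbors of k and l. Then whenever φ_k − φ_l = D and φ_l ≤ φ_m ≤ φ_k for all m ∈ M, one has ω̄_k − ω̄_l − (2K_{kl}/n) sin D − Σ_{m∈M} [(K_{km}/n) sin(φ_k − φ_m) + (K_{lm}/n) sin(φ_m − φ_l)] ≤ 0. -/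
open Real Finset

theorem constraints_imply_phase_inequality {ι : Type*} (M : Finset ι)
    (n : ℕ) (hn : 0 < n) (D : ℝ) (hD0 : 0 < D) (hDπ : D < π)
    (ωk ωl Kkl : ℝ) (hKkl : 0 ≤ Kkl)
    (Kk Kl : ι → ℝ) (hKk : ∀ m ∈ M, 0 ≤ Kk m) (hKl : ∀ m ∈ M, 0 ≤ Kl m)
    (hconstr : ∀ δ : ι → ℝ, (∀ m ∈ M, δ m = 0 ∨ δ m = 1) →
        |ωk - ωl| - 2 * Kkl / n * Real.sin D
          - Real.sin D / n * ∑ m ∈ M, (δ m * Kk m + (1 - δ m) * Kl m) ≤ 0)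
    (φk φl : ℝ) (φ : ι → ℝ) (hkl : φk - φl = D)
    (hφ : ∀ m ∈ M, φl ≤ φ m ∧ φ m ≤ φk) :
    ωk - ωl - 2 * Kkl / n * Real.sin D
      - ∑ m ∈ M, (Kk m / n * Real.sin (φk - φ m) + Kl m / n * Real.sin (φ m - φl))
      ≤ 0 := by
  set δ : ι → ℝ := fun m => if Kk m ≤ Kl m then 1 else 0 with hδ
  have h01 : ∀ m ∈ M, δ m = 0 ∨ δ m = 1 := by
    intro m _; by_cases h : Kk m ≤ Kl m <;> simp [hδ, h]
  have hC := hconstr δ h01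
  have hnpos : (0:ℝ) < (n:ℝ) := by exact_mod_cast hn
  -- termwise comparison of the sums
  have hsum : Real.sin D / n * ∑ m ∈ M, (δ m * Kk m + (1 - δ m) * Kl m)
      ≤ ∑ m ∈ M, (Kk m / n * Real.sin (φk - φ m) + Kl m / n * Real.sin (φ m - φl)) := by
    rw [Finset.mul_sum]
    refine Finset.sum_le_sum ?_
    intro m hm
    obtain ⟨h1, h2⟩ := hφ m hm
    set a := φk - φ m with ha
    set b := φ m - φl with hb
    have hab : a + b = D := by rw [ha, hb, ← hkl]; ring
    have ha0 : 0 ≤ a := by linarith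
    have hb0 : 0 ≤ b := by linarith
    have haπ : a ≤ π := by linarith
    have hbπ : b ≤ π := by linarith
    have hsa : 0 ≤ Real.sin a := Real.sin_nonneg_of_nonneg_of_le_pi ha0 haπ
    have hsb : 0 ≤ Real.sin b := Real.sin_nonneg_of_nonneg_of_le_pi hb0 hbπ
    have hsum_ab : Real.sin D ≤ Real.sin a + Real.sin b := by
      rw [← hab, Real.sin_add]
      have h1 := Real.cos_le_one a
      have h2 := Real.cos_le_one b
      nlinarith
    have hKkm := hKk m hm
    have hKlm := hKl m hm
    by_cases h : Kk m ≤ Kl m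
    · have hδ1 : δ m = 1 := by simp [hδ, h]
      rw [hδ1]
      have : Real.sin D * Kk m ≤ Real.sin a * Kk m + Real.sin b * Kl m := by
        nlinarith
      rw [div_mul_eq_mul_div, div_mul_eq_mul_div, div_mul_eq_mul_div, ← add_div,
        div_le_div_iff_of_pos_right hnpos]
      nlinarith
    · have hδ0 : δ m = 0 := by simp [hδ, h]
      rw [hδ0]
      push_neg at h
      have : Real.sin D * Kl m ≤ Real.sin a * Kk m + Real.sin b * Kl m := by
        nlinarith
      rw [div_mul_eq_mul_div, div_mul_eq_mul_div, div_mul_eq_mul_div, ← add_div,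
        div_le_div_iff_of_pos_right hnpos]
      nlinarith
  have habs : ωk - ωl ≤ |ωk - ωl| := le_abs_self _
  linarith
end
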